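/- Fix μ > 0, a = b = 7/2, a positive integer K, and T ∈ ℕ with (T:ℝ) > 2/(K·a − 2). Assume q := (T+1)(T + K·a + 1)·λ/(T+2)² < 1, where λ = μ/(μ + b). Then the user blocking probability satisfies the strict upper bound P_b(K,T) < P_K(T+1) / ((T+1)·(1 − q)²). -/

import Mathlib

open scoped BigOperators

/-- The distribution of the number of users in the coverage of a cluster of `K` RRUs:
`P_K(n) = b^{Ka} μ^n Γ(n + Ka) / ((μ + b)^{Ka+n} Γ(Ka) n!)` with `a = b = 7/2`. -/
noncomputable def Puser (μ : ℝ) (K : ℕ) (n : ℕ) : ℝ :=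
  (7/2 : ℝ) ^ ((K : ℝ) * (7/2)) * μ ^ n * Real.Gamma ((n : ℝ) + (K : ℝ) * (7/2)) /
    ((μ + 7/2) ^ ((K : ℝ) * (7/2) + (n : ℝ)) * Real.Gamma ((K : ℝ) * (7/2)) *
      (n.factorial : ℝ))

/-- The `n`-th summand of the user blocking probability: `((n − T)/n)·P_K(n)` for
`n ≥ T + 1`, and `0` otherwise. -/
noncomputable def blockTerm (μ : ℝ) (K T : ℕ) (n : ℕ) : ℝ :=
  if T + 1 ≤ n then (((n : ℝ) - (T : ℝ)) / (n : ℝ)) * Puser μ K n else 0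

/-- The user blocking probability `P_b(K,T) = Σ_{n=T+1}^∞ ((n − T)/n)·P_K(n)`. -/
noncomputable def Pblock (μ : ℝ) (K T : ℕ) : ℝ := ∑' n : ℕ, blockTerm μ K T n

-- auxiliary: positivity of Puser
lemma Puser_pos (μ : ℝ) (hμ : 0 < μ) (K : ℕ) (hK : 0 < K) (n : ℕ) : 0 < Puser μ K n := by
  have hb : (0:ℝ) < μ + 7/2 := by linarith
  have hKpos : (0:ℝ) < (K:ℝ) := by exact_mod_cast hK
  have hA : (0:ℝ) < (K:ℝ) * (7/2) := by positivity
  unfold Puser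
  apply div_pos
  · apply mul_pos (mul_pos (Real.rpow_pos_of_pos (by norm_num) _) (pow_pos hμ n))
    exact Real.Gamma_pos_of_pos (by positivity)
  · apply mul_pos (mul_pos (Real.rpow_pos_of_pos hb _) (Real.Gamma_pos_of_pos hA))
    exact_mod_cast Nat.factorial_pos n

-- ratio
lemma Puser_succ (μ : ℝ) (hμ : 0 < μ) (K : ℕ) (hK : 0 < K) (n : ℕ) :
    Puser μ K (n+1) = (μ / (μ + 7/2)) * (((n:ℝ) + (K:ℝ)*(7/2)) / ((n:ℝ)+1)) * Puser μ K n := by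
  have hb : (0:ℝ) < μ + 7/2 := by linarith
  have hKpos : (0:ℝ) < (K:ℝ) := by exact_mod_cast hK
  have hA : (0:ℝ) < (K:ℝ) * (7/2) := by positivity
  have hnA : (0:ℝ) < (n:ℝ) + (K:ℝ)*(7/2) := by positivity
  unfold Puser
  rw [show (((n+1 : ℕ)):ℝ) = (n:ℝ) + 1 by push_cast; ring]
  rw [show ((n:ℝ) + 1 + (K:ℝ)*(7/2)) = ((n:ℝ) + (K:ℝ)*(7/2)) + 1 by ring,
    Real.Gamma_add_one (ne_of_gt hnA),
    show ((K:ℝ)*(7/2) + ((n:ℝ)+1)) = ((K:ℝ)*(7/2) + (n:ℝ)) + 1 by ring,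
    Real.rpow_add_one (ne_of_gt hb), Nat.factorial_succ, pow_succ]
  have h1 : (μ + 7/2) ^ ((K:ℝ)*(7/2) + (n:ℝ)) ≠ 0 := ne_of_gt (Real.rpow_pos_of_pos hb _)
  have h2 : Real.Gamma ((K:ℝ)*(7/2)) ≠ 0 := ne_of_gt (Real.Gamma_pos_of_pos hA)
  have h3 : ((n.factorial : ℝ)) ≠ 0 := ne_of_gt (by exact_mod_cast Nat.factorial_pos n)
  have h4 : ((n:ℝ)+1) ≠ 0 := by positivity
  push_cast
  field_simp


set_option maxHeartbeats 1000000 in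
/-- strict upper bound on the user blocking probability:
`P_b(K,T) < P_K(T+1) / ((T+1)(1 − q)²)` where
`q = (T+1)(T+Ka+1)λ/(T+2)² < 1` and `λ = μ/(μ+b)`. -/
theorem Pblock_upper_bound (μ : ℝ) (hμ : 0 < μ) (K : ℕ) (hK : 0 < K) (T : ℕ)
    (hT : (T : ℝ) > 2 / ((K : ℝ) * (7/2) - 2))
    (hq : ((T : ℝ) + 1) * ((T : ℝ) + (K : ℝ) * (7/2) + 1) * (μ / (μ + 7/2)) /
        ((T : ℝ) + 2) ^ 2 < 1) :
    Pblock μ K T <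
      Puser μ K (T + 1) /
        (((T : ℝ) + 1) *
          (1 - ((T : ℝ) + 1) * ((T : ℝ) + (K : ℝ) * (7/2) + 1) * (μ / (μ + 7/2)) /
              ((T : ℝ) + 2) ^ 2) ^ 2) := by
  have hb : (0:ℝ) < μ + 7/2 := by linarith
  set A : ℝ := (K : ℝ) * (7/2) with hAdef
  set lam : ℝ := μ / (μ + 7/2) with hlamdef
  set q : ℝ := ((T:ℝ) + 1) * ((T:ℝ) + A + 1) * lam / ((T:ℝ) + 2) ^ 2 with hqdef
  have hK1 : (1:ℝ) ≤ (K:ℝ) := by exact_mod_cast hK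
  have hA : (7/2:ℝ) ≤ A := by rw [hAdef]; nlinarith
  have hA2 : (0:ℝ) < A - 2 := by linarith
  have hT0 : (0:ℝ) ≤ (T:ℝ) := Nat.cast_nonneg T
  have hT' : 2 < (T:ℝ) * (A - 2) := by
    rw [gt_iff_lt, div_lt_iff₀ hA2] at hT; exact hT
  have hlam0 : 0 < lam := div_pos hμ hb
  have hlam1 : lam < 1 := by rw [hlamdef, div_lt_one hb]; linarith
  have hq0 : 0 < q := by
    rw [hqdef]
    apply div_pos (mul_pos (mul_pos (by linarith) (by linarith)) hlam0) (by positivity)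
  -- core algebraic inequality
  have hc1 : (0:ℝ) < (A-2) * ((T:ℝ)+1) - 1 := by nlinarith
  have core : ∀ x : ℝ, (T:ℝ)+1 ≤ x →
      x*(x+A)*((T:ℝ)+2)^2 ≤ ((T:ℝ)+1)*((T:ℝ)+A+1)*(x+1)^2 := by
    intro x hx
    have hf : 0 ≤ ((A-2)*((T:ℝ)+1) - 1)*x - ((T:ℝ)+1+A) := by
      have h3 : ((A-2)*((T:ℝ)+1) - 1) * ((T:ℝ)+1) ≤ ((A-2)*((T:ℝ)+1) - 1) * x :=
        mul_le_mul_of_nonneg_left hx hc1.le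
      nlinarith [mul_nonneg hT0 (show (0:ℝ) ≤ (T:ℝ)*(A-2) - 2 by linarith)]
    nlinarith [mul_nonneg (sub_nonneg.mpr hx) hf]
  have coreS : ((T:ℝ)+2)*(((T:ℝ)+2)+A)*((T:ℝ)+2)^2
      < ((T:ℝ)+1)*((T:ℝ)+A+1)*(((T:ℝ)+2)+1)^2 := by
    have hf : 0 < ((A-2)*((T:ℝ)+1) - 1)*((T:ℝ)+2) - ((T:ℝ)+1+A) := by
      nlinarith [mul_nonneg hT0 (show (0:ℝ) ≤ (T:ℝ)*(A-2) - 2 by linarith)]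
    nlinarith
  -- formula for the shifted block term
  have Ppos : ∀ n : ℕ, 0 < Puser μ K n := Puser_pos μ hμ K hK
  have hbt : ∀ m : ℕ, blockTerm μ K T (m + (T+1)) =
      (((m:ℝ)+1)/((m:ℝ)+(T:ℝ)+1)) * Puser μ K (m + (T+1)) := by
    intro m
    rw [blockTerm, if_pos (by omega)]
    have h1 : ((m + (T+1) : ℕ) : ℝ) = (m:ℝ)+(T:ℝ)+1 := by push_cast; ring
    rw [h1]
    ring_nf
  set c : ℝ := Puser μ K (T+1) / ((T:ℝ)+1) with hcdef
  have hc : 0 < c := div_pos (Ppos (T+1)) (by linarith)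
  have hXpos : ∀ m : ℕ, (0:ℝ) < (m:ℝ)+(T:ℝ)+1 := fun m => by positivity
  -- frac bound
  have hfrac : ∀ m : ℕ, lam * (((m:ℝ)+(T:ℝ)+1) * (((m:ℝ)+(T:ℝ)+1)+A)) / (((m:ℝ)+(T:ℝ)+1)+1)^2 ≤ q := by
    intro m
    rw [hqdef, div_le_div_iff₀ (by positivity) (by positivity)]
    have hco := core ((m:ℝ)+(T:ℝ)+1) (by have := Nat.cast_nonneg (α := ℝ) m; linarith)
    calc lam * (((m:ℝ)+(T:ℝ)+1) * (((m:ℝ)+(T:ℝ)+1)+A)) * ((T:ℝ)+2)^2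
        = lam * (((m:ℝ)+(T:ℝ)+1)*(((m:ℝ)+(T:ℝ)+1)+A)*((T:ℝ)+2)^2) := by ring
      _ ≤ lam * (((T:ℝ)+1)*((T:ℝ)+A+1)*((((m:ℝ)+(T:ℝ)+1))+1)^2) :=
          mul_le_mul_of_nonneg_left hco hlam0.le
      _ = ((T:ℝ)+1)*((T:ℝ)+A+1)*lam * ((((m:ℝ)+(T:ℝ)+1))+1)^2 := by ring
  -- the inductive bound
  have bound : ∀ m : ℕ, blockTerm μ K T (m + (T+1)) ≤ ((m:ℝ)+1) * q^m * c := by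
    intro m
    induction m with
    | zero =>
      rw [hbt 0, hcdef]
      simp
      rw [inv_mul_eq_div]
    | succ m ih =>
      have hidx : (m+1) + (T+1) = (m + (T+1)) + 1 := by omega
      have hP : Puser μ K (m + (T+1)) ≤ ((m:ℝ)+(T:ℝ)+1) * (q^m * c) := by
        have h2 := hbt m
        have h3 : (((m:ℝ)+1)/((m:ℝ)+(T:ℝ)+1)) * Puser μ K (m + (T+1)) ≤ ((m:ℝ)+1) * q^m * c := by
          rw [← h2]; exact ih
        have h4 := mul_le_mul_of_nonneg_left h3 (le_of_lt (div_pos (hXpos m) (show (0:ℝ) < (m:ℝ)+1 by positivity)))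
        calc Puser μ K (m + (T+1))
            = (((m:ℝ)+(T:ℝ)+1)/((m:ℝ)+1)) * ((((m:ℝ)+1)/((m:ℝ)+(T:ℝ)+1)) * Puser μ K (m + (T+1))) := by
              field_simp
          _ ≤ (((m:ℝ)+(T:ℝ)+1)/((m:ℝ)+1)) * (((m:ℝ)+1) * q^m * c) := h4
          _ = ((m:ℝ)+(T:ℝ)+1) * (q^m * c) := by field_simp
      have hPr : Puser μ K ((m+1) + (T+1)) =
          lam * ((((m:ℝ)+(T:ℝ)+1) + A) / (((m:ℝ)+(T:ℝ)+1)+1)) * Puser μ K (m + (T+1)) := by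
        rw [hidx, Puser_succ μ hμ K hK (m + (T+1))]
        rw [← hlamdef, ← hAdef]
        have h1 : ((m + (T+1) : ℕ) : ℝ) = (m:ℝ)+(T:ℝ)+1 := by push_cast; ring
        rw [h1]
      rw [hbt (m+1), hPr]
      have hm1 : ((m+1 : ℕ):ℝ) = (m:ℝ)+1 := by push_cast; ring
      rw [hm1]
      set X : ℝ := (m:ℝ)+(T:ℝ)+1 with hXdef
      have hX : 0 < X := hXpos m
      calc (((m:ℝ)+1+1)/((m:ℝ)+1+(T:ℝ)+1)) * (lam * ((X + A)/(X+1)) * Puser μ K (m + (T+1)))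
          = ((m:ℝ)+2) * (lam * (X+A) / (X+1)^2) * Puser μ K (m + (T+1)) := by
            rw [show (m:ℝ)+1+(T:ℝ)+1 = X + 1 by rw [hXdef]; ring]
            field_simp; ring
        _ ≤ ((m:ℝ)+2) * (lam * (X+A) / (X+1)^2) * (X * (q^m * c)) := by
            apply mul_le_mul_of_nonneg_left hP
            have : 0 ≤ lam * (X+A) / (X+1)^2 := by positivity
            positivity
        _ = ((m:ℝ)+2) * (lam * (X * (X+A)) / (X+1)^2) * (q^m * c) := by ring
        _ ≤ ((m:ℝ)+2) * q * (q^m * c) := by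
            apply mul_le_mul_of_nonneg_right _ (by positivity)
            exact mul_le_mul_of_nonneg_left (hfrac m) (by positivity)
        _ = ((m:ℝ)+1+1) * q^(m+1) * c := by ring
  -- strict bound at m = 2
  have hfracS : lam * (((T:ℝ)+2) * (((T:ℝ)+2)+A)) / (((T:ℝ)+2)+1)^2 < q := by
    rw [hqdef, div_lt_div_iff₀ (by positivity) (by positivity)]
    calc lam * (((T:ℝ)+2) * (((T:ℝ)+2)+A)) * ((T:ℝ)+2)^2
        = lam * (((T:ℝ)+2)*(((T:ℝ)+2)+A)*((T:ℝ)+2)^2) := by ring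
      _ < lam * (((T:ℝ)+1)*((T:ℝ)+A+1)*(((T:ℝ)+2)+1)^2) :=
          mul_lt_mul_of_pos_left coreS hlam0
      _ = ((T:ℝ)+1)*((T:ℝ)+A+1)*lam * (((T:ℝ)+2)+1)^2 := by ring
  have hPle : ∀ m : ℕ, Puser μ K (m + (T+1)) ≤ ((m:ℝ)+(T:ℝ)+1) * (q^m * c) := by
    intro m
    have h2 := hbt m
    have h3 : (((m:ℝ)+1)/((m:ℝ)+(T:ℝ)+1)) * Puser μ K (m + (T+1)) ≤ ((m:ℝ)+1) * q^m * c := by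
      rw [← h2]; exact bound m
    have h4 := mul_le_mul_of_nonneg_left h3 (le_of_lt (div_pos (hXpos m) (show (0:ℝ) < (m:ℝ)+1 by positivity)))
    calc Puser μ K (m + (T+1))
        = (((m:ℝ)+(T:ℝ)+1)/((m:ℝ)+1)) * ((((m:ℝ)+1)/((m:ℝ)+(T:ℝ)+1)) * Puser μ K (m + (T+1))) := by
          field_simp
      _ ≤ (((m:ℝ)+(T:ℝ)+1)/((m:ℝ)+1)) * (((m:ℝ)+1) * q^m * c) := h4
      _ = ((m:ℝ)+(T:ℝ)+1) * (q^m * c) := by field_simp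
  have bound2 : blockTerm μ K T (2 + (T+1)) < 3 * q^2 * c := by
    have hidx : (2:ℕ) + (T+1) = (1 + (T+1)) + 1 := by omega
    have hPr : Puser μ K (2 + (T+1)) =
        lam * ((((T:ℝ)+2) + A) / (((T:ℝ)+2)+1)) * Puser μ K (1 + (T+1)) := by
      rw [hidx, Puser_succ μ hμ K hK (1 + (T+1))]
      rw [← hlamdef, ← hAdef]
      have h1 : ((1 + (T+1) : ℕ) : ℝ) = (T:ℝ)+2 := by push_cast; ring
      rw [h1]
    have hb2 := hbt 2
    rw [hb2, hPr]
    have hx2 : (0:ℝ) < (T:ℝ)+2 := by linarith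
    calc (((2:ℕ):ℝ)+1)/(((2:ℕ):ℝ)+(T:ℝ)+1) * (lam * ((((T:ℝ)+2)+A)/(((T:ℝ)+2)+1)) * Puser μ K (1 + (T+1)))
        = 3 * (lam * (((T:ℝ)+2)+A) / (((T:ℝ)+2)+1)^2) * Puser μ K (1 + (T+1)) := by
          norm_num
          rw [show ((2:ℝ))+(T:ℝ)+1 = ((T:ℝ)+2) + 1 by ring]
          field_simp
      _ ≤ 3 * (lam * (((T:ℝ)+2)+A) / (((T:ℝ)+2)+1)^2) * (((T:ℝ)+2) * (q^1 * c)) := by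
          apply mul_le_mul_of_nonneg_left _ (by positivity)
          have h5 := hPle 1
          push_cast at h5
          calc Puser μ K (1+(T+1)) ≤ ((1:ℝ)+(T:ℝ)+1) * (q^1*c) := h5
            _ = ((T:ℝ)+2) * (q^1*c) := by ring
      _ = 3 * (lam * (((T:ℝ)+2) * (((T:ℝ)+2)+A)) / (((T:ℝ)+2)+1)^2) * (q * c) := by ring
      _ < 3 * q * (q * c) := by
          apply mul_lt_mul_of_pos_right _ (by positivity)
          exact mul_lt_mul_of_pos_left hfracS (by norm_num)
      _ = 3 * q^2 * c := by ring
  -- nonnegativity of terms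
  have tnn : ∀ m : ℕ, 0 ≤ blockTerm μ K T (m + (T+1)) := by
    intro m
    rw [hbt m]
    exact mul_nonneg (by positivity) (Ppos _).le
  -- HasSum of the dominating series
  have hqn : ‖q‖ < 1 := by rw [Real.norm_eq_abs, abs_of_pos hq0]; exact hq
  have h1s : HasSum (fun n : ℕ => (n:ℝ) * q^n) (q/(1-q)^2) :=
    hasSum_coe_mul_geometric_of_norm_lt_one hqn
  have h2s : HasSum (fun n : ℕ => q^n) (1-q)⁻¹ := hasSum_geometric_of_lt_one hq0.le hq
  have hq1ne : (1:ℝ) - q ≠ 0 := by intro h; nlinarith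
  have hu : HasSum (fun m : ℕ => ((m:ℝ)+1) * q^m * c) (c/(1-q)^2) := by
    have h3 := (h1s.add h2s).mul_right c
    have hfun : (fun m : ℕ => ((m:ℝ)+1)*q^m*c) = fun m : ℕ => ((m:ℝ)*q^m + q^m)*c := by
      funext m; ring
    rw [hfun]
    have hval : c/(1-q)^2 = (q/(1-q)^2 + (1-q)⁻¹)*c := by field_simp; ring
    rw [hval]
    exact h3
  have husum : Summable (fun m : ℕ => ((m:ℝ)+1)*q^m*c) := hu.summable
  have htsum : Summable (fun m : ℕ => blockTerm μ K T (m+(T+1))) :=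
    Summable.of_nonneg_of_le tnn bound husum
  have hbsum : Summable (blockTerm μ K T) := (summable_nat_add_iff (T+1)).mp htsum
  have hlt : (∑' m : ℕ, blockTerm μ K T (m+(T+1))) < ∑' m : ℕ, ((m:ℝ)+1)*q^m*c := by
    refine Summable.tsum_lt_tsum bound (i := 2) ?_ htsum husum
    calc blockTerm μ K T (2+(T+1)) < 3*q^2*c := bound2
      _ = (((2:ℕ):ℝ)+1)*q^2*c := by norm_num
  have hzero : ∑ i ∈ Finset.range (T+1), blockTerm μ K T i = 0 := by
    apply Finset.sum_eq_zero
    intro i hi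
    rw [blockTerm, if_neg]
    exact Nat.not_le.mpr (Finset.mem_range.mp hi)
  have hPb : Pblock μ K T = ∑' m : ℕ, blockTerm μ K T (m+(T+1)) := by
    rw [Pblock, ← Summable.sum_add_tsum_nat_add (f := blockTerm μ K T) (T+1) hbsum, hzero, zero_add]
  calc Pblock μ K T = ∑' m : ℕ, blockTerm μ K T (m+(T+1)) := hPb
    _ < ∑' m : ℕ, ((m:ℝ)+1)*q^m*c := hlt
    _ = c/(1-q)^2 := hu.tsum_eq
    _ = Puser μ K (T+1) / (((T:ℝ)+1) * (1-q)^2) := by rw [hcdef, div_div]
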